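/- (Example: the manifold M(A_40) has no Spin structure.) Let A_40 be the 5×5 Bott matrix whose rows are (0,0,1,0,1), (0,0,1,1,0), (0,0,0,1,1), (0,0,0,0,0), (0,0,0,0,0). Then there exists no group homomorphism ε from Γ(A_40) to the group of units of Cl_5 satisfying ε(s_1) ∈ {ι(e_3)ι(e_5), −ι(e_3)ι(e_5)} and ε(s_2) ∈ {ι(e_3)ι(e_4), −ι(e_3)ι(e_4)}. -/

import Mathlib

noncomputable section

open Matrix

/-- The Euclidean group `E(n)`: pairs `(M, b)` with `M ∈ O(n)`, `b ∈ ℝⁿ`,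
acting on `ℝⁿ` by `x ↦ M x + b`. -/
@[ext]
structure EuclideanGroup (n : ℕ) where
  M : Matrix.orthogonalGroup (Fin n) ℝ
  b : Fin n → ℝ

namespace EuclideanGroup

variable {n : ℕ}

instance : Mul (EuclideanGroup n) :=
  ⟨fun g h => ⟨g.M * h.M, (g.M : Matrix (Fin n) (Fin n) ℝ) *ᵥ h.b + g.b⟩⟩

instance : One (EuclideanGroup n) := ⟨⟨1, 0⟩⟩

instance : Inv (EuclideanGroup n) :=
  ⟨fun g => ⟨g.M⁻¹, -(star (g.M : Matrix (Fin n) (Fin n) ℝ) *ᵥ g.b)⟩⟩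

@[simp] theorem mul_M (g h : EuclideanGroup n) : (g * h).M = g.M * h.M := rfl
@[simp] theorem mul_b (g h : EuclideanGroup n) :
    (g * h).b = (g.M : Matrix (Fin n) (Fin n) ℝ) *ᵥ h.b + g.b := rfl
@[simp] theorem one_M : (1 : EuclideanGroup n).M = 1 := rfl
@[simp] theorem one_b : (1 : EuclideanGroup n).b = 0 := rfl
@[simp] theorem inv_M (g : EuclideanGroup n) : g⁻¹.M = g.M⁻¹ := rfl
@[simp] theorem inv_b (g : EuclideanGroup n) :
    g⁻¹.b = -(star (g.M : Matrix (Fin n) (Fin n) ℝ) *ᵥ g.b) := rfl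

instance : Group (EuclideanGroup n) where
  mul_assoc a b c :=
    EuclideanGroup.ext (mul_assoc _ _ _)
      (by simp [Matrix.mulVec_add, Matrix.mulVec_mulVec, add_assoc])
  one_mul a := by ext <;> simp
  mul_one a := by ext <;> simp
  inv_mul_cancel a :=
    EuclideanGroup.ext (inv_mul_cancel _) (by exact add_neg_cancel _)

end EuclideanGroup


/-- A Bott matrix: a strictly upper triangular binary matrix
(entries `0` or `1`, and `A i j = 0` whenever `j ≤ i`). -/
def IsBottMatrix {n : ℕ} (A : Matrix (Fin n) (Fin n) ℕ) : Prop :=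
  (∀ i j : Fin n, A i j = 0 ∨ A i j = 1) ∧ ∀ i j : Fin n, (j : ℕ) ≤ (i : ℕ) → A i j = 0

/-- The diagonal matrix `D_i` with `(k,k)`-entry `(-1) ^ (A i k)`. -/
def Dmat {n : ℕ} (A : Matrix (Fin n) (Fin n) ℕ) (i : Fin n) : Matrix (Fin n) (Fin n) ℝ :=
  Matrix.diagonal fun k => (-1 : ℝ) ^ (A i k)

theorem diagonal_pm_mem_orthogonalGroup {n : ℕ} (d : Fin n → ℝ)
    (hd : ∀ k, d k = 1 ∨ d k = -1) :
    Matrix.diagonal d ∈ Matrix.orthogonalGroup (Fin n) ℝ := by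
  rw [Matrix.mem_orthogonalGroup_iff]
  have : (Matrix.diagonal d)ᵀ = Matrix.diagonal d := by
    simp [Matrix.star_eq_conjTranspose, Matrix.diagonal_conjTranspose]
  rw [this, Matrix.diagonal_mul_diagonal]
  have h1 : (fun k => d k * d k) = fun _ => (1 : ℝ) :=
    funext fun k => by rcases hd k with h | h <;> simp [h]
  rw [h1, Matrix.diagonal_one]

theorem Dmat_mem {n : ℕ} (A : Matrix (Fin n) (Fin n) ℕ) (i : Fin n) :
    Dmat A i ∈ Matrix.orthogonalGroup (Fin n) ℝ := by
  refine diagonal_pm_mem_orthogonalGroup _ fun k => ?_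
  rcases Nat.even_or_odd (A i k) with h | h
  · exact Or.inl (h.neg_one_pow)
  · exact Or.inr (h.neg_one_pow)

/-- `D_i` as an element of the orthogonal group. -/
def Dorth {n : ℕ} (A : Matrix (Fin n) (Fin n) ℕ) (i : Fin n) :
    Matrix.orthogonalGroup (Fin n) ℝ :=
  ⟨Dmat A i, Dmat_mem A i⟩

/-- The generators `s_i` of the Bieberbach group of the real Bott manifold `M(A)`:
for `i` with `i + 1 < n` (i.e. the mathematical indices `1 ≤ i ≤ n - 1`),
`s_i = (D_i, (1/2) e_i)`, and the last generator (mathematical index `n`) is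
`s_n = (I, e_n)`.  (Indices are `0`-based.) -/
def sgen {n : ℕ} (A : Matrix (Fin n) (Fin n) ℕ) (i : Fin n) : EuclideanGroup n :=
  if (i : ℕ) + 1 = n then ⟨1, Pi.single i 1⟩
  else ⟨Dorth A i, Pi.single i (1 / 2 : ℝ)⟩

/-- The fundamental group `Γ(A)` of the real Bott manifold `M(A)`, as the subgroup
of `E(n)` generated by `s_1, …, s_n`. -/
def BottGroup {n : ℕ} (A : Matrix (Fin n) (Fin n) ℕ) : Subgroup (EuclideanGroup n) :=
  Subgroup.closure (Set.range (sgen A))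

theorem sgen_mem {n : ℕ} (A : Matrix (Fin n) (Fin n) ℕ) (i : Fin n) :
    sgen A i ∈ BottGroup A :=
  Subgroup.subset_closure (Set.mem_range_self i)

/-- The homomorphism sending an affine isometry `(M, b)` to its linear part `M`. -/
def linearPart (n : ℕ) : EuclideanGroup n →* Matrix.orthogonalGroup (Fin n) ℝ where
  toFun g := g.M
  map_one' := rfl
  map_mul' _ _ := rfl

/-- The standard positive definite quadratic form `Q(x) = x₁² + ⋯ + xₙ²` on `ℝⁿ`. -/
def Qstd (n : ℕ) : QuadraticForm ℝ (Fin n → ℝ) :=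
  QuadraticMap.weightedSumSquares ℝ (fun _ : Fin n => (1 : ℝ))

/-- The Clifford algebra `Cl_n` of `Q(x) = x₁² + ⋯ + xₙ²`. -/
abbrev Cl (n : ℕ) := CliffordAlgebra (Qstd n)

/-- For a finite set `S = {s₁ < s₂ < ⋯ < s_k} ⊆ {1, …, n}`, the product
`e_S = ι(e_{s₁}) ι(e_{s₂}) ⋯ ι(e_{s_k})` in `Cl_n` (with `e_∅ = 1`). -/
def eProd {n : ℕ} (S : Finset (Fin n)) : Cl n :=
  ((S.sort (· ≤ ·)).map fun j => CliffordAlgebra.ι (Qstd n) (Pi.single j 1)).prod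


/-- The Bott matrix `A₄₀` from Nazra's list of `5`-dimensional oriented real Bott
manifolds. -/
def A40 : Matrix (Fin 5) (Fin 5) ℕ :=
  !![0,0,1,0,1; 0,0,1,1,0; 0,0,0,1,1; 0,0,0,0,0; 0,0,0,0,0]

theorem comm01 : sgen A40 0 * sgen A40 1 = sgen A40 1 * sgen A40 0 := by
  have h0 : sgen A40 0 = ⟨Dorth A40 0, Pi.single 0 (1/2 : ℝ)⟩ := by simp [sgen]
  have h1 : sgen A40 1 = ⟨Dorth A40 1, Pi.single 1 (1/2 : ℝ)⟩ := by simp [sgen]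
  rw [h0, h1]
  have hM : Dorth A40 0 * Dorth A40 1 = Dorth A40 1 * Dorth A40 0 := by
    apply Subtype.ext
    show (Dmat A40 0) * (Dmat A40 1) = (Dmat A40 1) * (Dmat A40 0)
    simp only [Dmat, Matrix.diagonal_mul_diagonal, mul_comm]
  have hb : (Dmat A40 0) *ᵥ Pi.single 1 (1/2 : ℝ) + Pi.single 0 (1/2 : ℝ)
      = (Dmat A40 1) *ᵥ Pi.single 0 (1/2 : ℝ) + Pi.single 1 (1/2 : ℝ) := by
    simp only [Dmat, Matrix.diagonal_mulVec_single]
    have e1 : A40 0 1 = 0 := by decide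
    have e2 : A40 1 0 = 0 := by decide
    rw [e1, e2]
    simp [add_comm]
  exact EuclideanGroup.ext hM hb

theorem single_isOrtho {i j : Fin 5} (h : i ≠ j) :
    (Qstd 5).IsOrtho (Pi.single i (1:ℝ)) (Pi.single j 1) := by
  rw [QuadraticMap.isOrtho_def]
  simp only [Qstd, QuadraticMap.weightedSumSquares_apply, smul_eq_mul, one_mul]
  rw [← Finset.sum_add_distrib]
  congr 1; funext k
  rcases eq_or_ne k i with rfl | hi <;> rcases eq_or_ne k j with rfl | hj <;>
    simp_all [Pi.single_apply]

theorem Qstd_single (i : Fin 5) : (Qstd 5) (Pi.single i (1:ℝ)) = 1 := by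
  simp [Qstd, QuadraticMap.weightedSumSquares_apply, Pi.single_apply]

theorem key_anticomm :
    (CliffordAlgebra.ι (Qstd 5) (Pi.single 2 1) * CliffordAlgebra.ι (Qstd 5) (Pi.single 4 1)) *
      (CliffordAlgebra.ι (Qstd 5) (Pi.single 2 1) * CliffordAlgebra.ι (Qstd 5) (Pi.single 3 1)) =
    -((CliffordAlgebra.ι (Qstd 5) (Pi.single 2 1) * CliffordAlgebra.ι (Qstd 5) (Pi.single 3 1)) *
      (CliffordAlgebra.ι (Qstd 5) (Pi.single 2 1) * CliffordAlgebra.ι (Qstd 5) (Pi.single 4 1))) := by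
  set a := CliffordAlgebra.ι (Qstd 5) (Pi.single (2 : Fin 5) (1:ℝ)) with ha
  set b := CliffordAlgebra.ι (Qstd 5) (Pi.single (3 : Fin 5) (1:ℝ)) with hb
  set c := CliffordAlgebra.ι (Qstd 5) (Pi.single (4 : Fin 5) (1:ℝ)) with hc
  have haa : a * a = 1 := by
    rw [ha, CliffordAlgebra.ι_sq_scalar, Qstd_single, _root_.map_one]
  have hca : c * a = -(a * c) :=
    CliffordAlgebra.ι_mul_ι_comm_of_isOrtho (single_isOrtho (by decide))
  have hba : b * a = -(a * b) :=
    CliffordAlgebra.ι_mul_ι_comm_of_isOrtho (single_isOrtho (by decide))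
  have hcb : c * b = -(b * c) :=
    CliffordAlgebra.ι_mul_ι_comm_of_isOrtho (single_isOrtho (by decide))
  have l1 : (a * c) * (a * b) = b * c := by
    rw [mul_assoc, ← mul_assoc c a b, hca, neg_mul, mul_neg, ← mul_assoc, ← mul_assoc, haa,
      one_mul, hcb, neg_neg]
  have l2 : (a * b) * (a * c) = -(b * c) := by
    rw [mul_assoc, ← mul_assoc b a c, hba, neg_mul, mul_neg, ← mul_assoc, ← mul_assoc, haa,
      one_mul]
  rw [l1, l2, neg_neg]
/-- The real Bott manifold `M(A₄₀)` has no Spin structure: no group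
homomorphism `ε : Γ(A₄₀) → Cl₅ˣ` satisfies `ε(s₁) = ± ι(e₃) ι(e₅)` and
`ε(s₂) = ± ι(e₃) ι(e₄)` (indices `0`-based below). -/
theorem A40_no_spin :
    ¬∃ ε : BottGroup A40 →* (Cl 5)ˣ,
      (((ε ⟨sgen A40 0, sgen_mem A40 0⟩ : (Cl 5)ˣ) : Cl 5) =
          CliffordAlgebra.ι (Qstd 5) (Pi.single 2 1) *
            CliffordAlgebra.ι (Qstd 5) (Pi.single 4 1) ∨
        ((ε ⟨sgen A40 0, sgen_mem A40 0⟩ : (Cl 5)ˣ) : Cl 5) =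
          -(CliffordAlgebra.ι (Qstd 5) (Pi.single 2 1) *
            CliffordAlgebra.ι (Qstd 5) (Pi.single 4 1))) ∧
      (((ε ⟨sgen A40 1, sgen_mem A40 1⟩ : (Cl 5)ˣ) : Cl 5) =
          CliffordAlgebra.ι (Qstd 5) (Pi.single 2 1) *
            CliffordAlgebra.ι (Qstd 5) (Pi.single 3 1) ∨
        ((ε ⟨sgen A40 1, sgen_mem A40 1⟩ : (Cl 5)ˣ) : Cl 5) =
          -(CliffordAlgebra.ι (Qstd 5) (Pi.single 2 1) *
            CliffordAlgebra.ι (Qstd 5) (Pi.single 3 1))) := by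
  rintro ⟨ε, h1, h2⟩
  set X := CliffordAlgebra.ι (Qstd 5) (Pi.single (2:Fin 5) (1:ℝ)) *
    CliffordAlgebra.ι (Qstd 5) (Pi.single (4:Fin 5) 1) with hX
  set Y := CliffordAlgebra.ι (Qstd 5) (Pi.single (2:Fin 5) (1:ℝ)) *
    CliffordAlgebra.ι (Qstd 5) (Pi.single (3:Fin 5) 1) with hY
  set g0 : BottGroup A40 := ⟨sgen A40 0, sgen_mem A40 0⟩ with hg0
  set g1 : BottGroup A40 := ⟨sgen A40 1, sgen_mem A40 1⟩ with hg1
  have hgg : g0 * g1 = g1 * g0 := Subtype.ext comm01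
  have hcomm : ((ε g0 : (Cl 5)ˣ) : Cl 5) * ((ε g1 : (Cl 5)ˣ) : Cl 5)
      = ((ε g1 : (Cl 5)ˣ) : Cl 5) * ((ε g0 : (Cl 5)ˣ) : Cl 5) := by
    rw [← Units.val_mul, ← Units.val_mul, ← _root_.map_mul, ← _root_.map_mul, hgg]
  have hUX : IsUnit X := by
    rcases h1 with h1 | h1
    · rw [← h1]; exact (ε g0).isUnit
    · have : X = -((ε g0 : (Cl 5)ˣ) : Cl 5) := by rw [h1, neg_neg]
      rw [this]; exact (ε g0).isUnit.neg
  have hUY : IsUnit Y := by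
    rcases h2 with h2 | h2
    · rw [← h2]; exact (ε g1).isUnit
    · have : Y = -((ε g1 : (Cl 5)ˣ) : Cl 5) := by rw [h2, neg_neg]
      rw [this]; exact (ε g1).isUnit.neg
  have hXcomm : X * Y = Y * X := by
    rcases h1 with h1 | h1 <;> rcases h2 with h2 | h2 <;> rw [h1, h2] at hcomm <;>
      simpa [neg_mul, mul_neg, neg_neg, neg_inj] using hcomm
  have hneg : Y * X = -(Y * X) := by
    have hk := key_anticomm
    rw [hXcomm] at hk
    exact hk
  have hz : Y * X = 0 := by
    have hsum : Y * X + Y * X = 0 := by nth_rewrite 1 [hneg]; exact neg_add_cancel _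
    rw [← two_smul ℝ] at hsum
    rcases smul_eq_zero.mp hsum with h | h
    · norm_num at h
    · exact h
  exact (hUY.mul hUX).ne_zero hz
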